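/- In the multiplicative-weights boosting algorithm: suppose at each iteration i the length function on edge e is multiplied by (1 + (ε/κ)·z^(i)F^(i)(e)/u(e)) where z^(i)F^(i)(e) ≤ κ·u(e), the initial length of e is δ/u(e), and the final length of e is less than 1/u(e). Then the total flow routed through e over all iterations, Σ_i z^(i)F^(i)(e), is strictly less than κ·log_{1+ε}(1/δ) times u(e). Consequently, scaling the accumulated flow down by κ·log_{1+ε}(1/δ) yields a capacity-respecting flow. -/

import Mathlib

open Finset

/-- **Multiplicative-weights edge-length growth.** If the length of an edge of capacity
`u` starts at `δ/u`, is multiplied at iteration `i` by `(1 + (ε/κ)·f(i)/u)` where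
`f(i) = z⁽ⁱ⁾F⁽ⁱ⁾(e) ≤ κ·u` is the flow routed through the edge at iteration `i`, and
ends below `1/u`, then the total flow routed through the edge is strictly less than
`κ·log_{1+ε}(1/δ)` times `u`; consequently scaling by `κ·log_{1+ε}(1/δ)` respects the
capacity. -/
theorem mwu_congestion_bound (u ε κ δ : ℝ) (T : ℕ) (f ℓ : ℕ → ℝ)
    (hu : 0 < u) (hε0 : 0 < ε) (hε1 : ε < 1) (hκ : 1 ≤ κ)
    (hδ0 : 0 < δ) (hδ1 : δ < 1)
    (h0 : ℓ 0 = δ / u)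
    (hf : ∀ i, 0 ≤ f i ∧ f i ≤ κ * u)
    (hrec : ∀ i, ℓ (i + 1) = ℓ i * (1 + (ε / κ) * f (i + 1) / u))
    (hfin : ℓ T < 1 / u) :
    (∑ i ∈ Finset.Icc 1 T, f i) < κ * Real.logb (1 + ε) (1 / δ) * u ∧
    (∑ i ∈ Finset.Icc 1 T, f i) / (κ * Real.logb (1 + ε) (1 / δ)) ≤ u := by
  have hκ0 : (0:ℝ) < κ := lt_of_lt_of_le one_pos hκ
  have hκu : (0:ℝ) < κ * u := mul_pos hκ0 hu
  have hb : (1:ℝ) < 1 + ε := by linarith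
  -- main invariant
  have key : ∀ n, (δ / u) * (1 + ε) ^ ((∑ i ∈ Finset.Icc 1 n, f i) / (κ * u)) ≤ ℓ n := by
    intro n
    induction n with
    | zero => simp [h0]
    | succ n ih =>
      have hx0 : 0 ≤ f (n+1) / (κ * u) := div_nonneg (hf (n+1)).1 hκu.le
      have hx1 : f (n+1) / (κ * u) ≤ 1 := (div_le_one hκu).2 (hf (n+1)).2
      have hber : (1 + ε) ^ (f (n+1) / (κ * u)) ≤ 1 + (f (n+1) / (κ * u)) * ε :=
        rpow_one_add_le_one_add_mul_self (by linarith) hx0 hx1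
      have hsum : (∑ i ∈ Finset.Icc 1 (n+1), f i) =
          (∑ i ∈ Finset.Icc 1 n, f i) + f (n+1) := by
        rw [Finset.sum_Icc_succ_top (by omega)]
      have hrw : (∑ i ∈ Finset.Icc 1 (n+1), f i) / (κ * u) =
          (∑ i ∈ Finset.Icc 1 n, f i) / (κ * u) + f (n+1) / (κ * u) := by
        rw [hsum]; ring
      rw [hrec n, hrw, Real.rpow_add (by linarith)]
      have heq : 1 + (ε / κ) * f (n+1) / u = 1 + (f (n+1) / (κ * u)) * ε := by
        field_simp
      have hpos1 : 0 ≤ (δ / u) * (1 + ε) ^ ((∑ i ∈ Finset.Icc 1 n, f i) / (κ * u)) := by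
        positivity
      calc (δ / u) * ((1 + ε) ^ ((∑ i ∈ Finset.Icc 1 n, f i) / (κ * u)) *
              (1 + ε) ^ (f (n+1) / (κ * u)))
          = ((δ / u) * (1 + ε) ^ ((∑ i ∈ Finset.Icc 1 n, f i) / (κ * u))) *
              (1 + ε) ^ (f (n+1) / (κ * u)) := by ring
        _ ≤ ℓ n * (1 + (f (n+1) / (κ * u)) * ε) := by
            apply mul_le_mul ih hber (by positivity)
            exact le_trans hpos1 ih
        _ = ℓ n * (1 + (ε / κ) * f (n+1) / u) := by rw [heq]
  -- conclude
  set S := ∑ i ∈ Finset.Icc 1 T, f i with hS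
  have h1 : (δ / u) * (1 + ε) ^ (S / (κ * u)) < 1 / u := lt_of_le_of_lt (key T) hfin
  have h2 : (1 + ε) ^ (S / (κ * u)) < 1 / δ := by
    have h1' := mul_lt_mul_of_pos_right h1 hu
    rw [div_mul_eq_mul_div, div_mul_cancel₀ _ hu.ne', one_div_mul_cancel hu.ne'] at h1'
    rw [lt_div_iff₀ hδ0]
    nlinarith
  have h3 : S / (κ * u) < Real.logb (1 + ε) (1 / δ) := by
    have hδinv : (0:ℝ) < 1 / δ := by positivity
    have : (1 + ε) ^ (S / (κ * u)) < (1 + ε) ^ (Real.logb (1 + ε) (1 / δ)) := by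
      rwa [Real.rpow_logb (by linarith) (by linarith) hδinv]
    exact (Real.rpow_lt_rpow_left_iff hb).1 this
  have hL : 0 < Real.logb (1 + ε) (1 / δ) := by
    have hS0 : 0 ≤ S / (κ * u) := by
      apply div_nonneg _ hκu.le
      exact Finset.sum_nonneg fun i _ => (hf i).1
    linarith
  have hmain : S < κ * Real.logb (1 + ε) (1 / δ) * u := by
    have := (div_lt_iff₀ hκu).1 h3
    nlinarith
  refine ⟨hmain, ?_⟩
  rw [div_le_iff₀ (by positivity)]
  nlinarith
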